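/- S_{G,E} is E*-unitary — that is, whenever e is a nonzero idempotent of S_{G,E} and s ∈ S_{G,E} satisfies s·e = e, then s is idempotent — if and only if (G, E, φ) is pseudo free. -/

import Mathlib

/-- Finite paths in a directed graph: `Pth.nil x` is the length-zero path at the
vertex `x`, and `Pth.cons e p` is the path whose first edge is `e`, followed by `p`. -/
inductive Pth (V : Type) (Ed : Type) : Type where
  | nil : V → Pth V Ed
  | cons : Ed → Pth V Ed → Pth V Ed

/-- A self-similar graph `(G, E, φ)`: a group `G` acting on a directed graph `E`
(with vertex set `V`, edge set `Ed`, range `r` and source `d`) by graph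
automorphisms, together with a one-cocycle `φ : G × E¹ → G` for the action on
edges, satisfying `φ(g,e)·x = g·x` for all vertices `x`. -/
structure SelfSimGraph (G V Ed : Type) [Group G] : Type where
  r : Ed → V
  d : Ed → V
  actV : G → V → V
  actE : G → Ed → Ed
  actV_one : ∀ x, actV 1 x = x
  actV_mul : ∀ g h x, actV (g * h) x = actV g (actV h x)
  actE_one : ∀ e, actE 1 e = e
  actE_mul : ∀ g h e, actE (g * h) e = actE g (actE h e)
  r_act : ∀ g e, r (actE g e) = actV g (r e)
  d_act : ∀ g e, d (actE g e) = actV g (d e)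
  phi : G → Ed → G
  phi_cocycle : ∀ g h e, phi (g * h) e = phi g (actE h e) * phi h e
  phi_vertex : ∀ g e x, actV (phi g e) x = actV g x

variable {G V Ed : Type} [Group G]

/-- The range `r(α)` of a finite path. -/
def rngP (S : SelfSimGraph G V Ed) : Pth V Ed → V
  | Pth.nil x => x
  | Pth.cons e _ => S.r e

/-- The source `d(α)` of a finite path. -/
def srcP (S : SelfSimGraph G V Ed) : Pth V Ed → V
  | Pth.nil x => x
  | Pth.cons _ p => srcP S p

/-- Well-formedness of a finite path: consecutive edges match, `d(αᵢ) = r(αᵢ₊₁)`. -/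
def WFP (S : SelfSimGraph G V Ed) : Pth V Ed → Prop
  | Pth.nil _ => True
  | Pth.cons e p => S.d e = rngP S p ∧ WFP S p

/-- The length of a finite path. -/
def lenP : Pth V Ed → ℕ
  | Pth.nil _ => 0
  | Pth.cons _ p => lenP p + 1

/-- Concatenation `αβ` of finite paths (meaningful when `d(α) = r(β)`). -/
def compP : Pth V Ed → Pth V Ed → Pth V Ed
  | Pth.nil _, q => q
  | Pth.cons e p, q => Pth.cons e (compP p q)

/-- The action of `G` extended to finite paths:
`g·x = g·x` on vertices and `g·(eα) = (g·e)(φ(g,e)·α)`. -/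
def actP (S : SelfSimGraph G V Ed) : G → Pth V Ed → Pth V Ed
  | g, Pth.nil x => Pth.nil (S.actV g x)
  | g, Pth.cons e p => Pth.cons (S.actE g e) (actP S (S.phi g e) p)

/-- The cocycle extended to finite paths:
`φ(g,x) = g` on vertices and `φ(g, eα) = φ(φ(g,e), α)`. -/
def phiP (S : SelfSimGraph G V Ed) : G → Pth V Ed → G
  | g, Pth.nil _ => g
  | g, Pth.cons e p => phiP S (S.phi g e) p

/-- A path `τ` is strongly fixed by `g` if `g·τ = τ` and `φ(g,τ) = 1`. -/
def StronglyFixed (S : SelfSimGraph G V Ed) (g : G) (τ : Pth V Ed) : Prop :=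
  WFP S τ ∧ actP S g τ = τ ∧ phiP S g τ = 1

/-- `(G,E,φ)` is pseudo free if `g·e = e` and `φ(g,e) = 1` imply `g = 1`. -/
def PseudoFree (S : SelfSimGraph G V Ed) : Prop :=
  ∀ (g : G) (e : Ed), S.actE g e = e → S.phi g e = 1 → g = 1

/-- `p` is a prefix (initial segment) of `q`: `q = pε` for some path `ε`. -/
def IsPrefixP (S : SelfSimGraph G V Ed) (p q : Pth V Ed) : Prop :=
  ∃ ε, WFP S ε ∧ rngP S ε = srcP S p ∧ compP p ε = q

/-- The set `M_g` of minimal strongly fixed paths for `g`: strongly fixed paths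
none of whose proper prefixes is strongly fixed. -/
def MinSF (S : SelfSimGraph G V Ed) (g : G) : Set (Pth V Ed) :=
  {μ | StronglyFixed S g μ ∧ ∀ p, IsPrefixP S p μ → p ≠ μ → ¬StronglyFixed S g p}

/-- Well-formedness of an infinite path, viewed as a sequence of edges:
`d(ξᵢ) = r(ξᵢ₊₁)`. -/
def InfWF (S : SelfSimGraph G V Ed) (ξ : ℕ → Ed) : Prop :=
  ∀ i, S.d (ξ i) = S.r (ξ (i + 1))

/-- The range `r(ξ)` of an infinite path. -/
def rngInf (S : SelfSimGraph G V Ed) (ξ : ℕ → Ed) : V := S.r (ξ 0)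

/-- `takeP S ξ n` is the finite path `ξ|ₙ = ξ₁⋯ξₙ` (with `ξ|₀ = r(ξ₁)`). -/
def takeP (S : SelfSimGraph G V Ed) : (ℕ → Ed) → ℕ → Pth V Ed
  | ξ, 0 => Pth.nil (S.r (ξ 0))
  | ξ, n + 1 => Pth.cons (ξ 0) (takeP S (fun i => ξ (i + 1)) n)

/-- Membership of an infinite path in the cylinder `Z(α)`:
the initial segment of `ξ` of length `|α|` equals `α`. -/
def InZ (S : SelfSimGraph G V Ed) (α : Pth V Ed) (ξ : ℕ → Ed) : Prop :=
  takeP S ξ (lenP α) = α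

/-- The infinite path `αξ` obtained by prepending a finite path to an infinite one. -/
def prepSeq : Pth V Ed → (ℕ → Ed) → ℕ → Ed
  | Pth.nil _, ξ, n => ξ n
  | Pth.cons e _, _, 0 => e
  | Pth.cons _ p, ξ, n + 1 => prepSeq p ξ n

/-- Dropping the first `k` edges of an infinite path. -/
def dropSeq (k : ℕ) (ξ : ℕ → Ed) : ℕ → Ed := fun n => ξ (n + k)

/-- The space `E^∞` of infinite paths. -/
def InfPath (S : SelfSimGraph G V Ed) : Type := {ξ : ℕ → Ed // InfWF S ξ}

/-- The topology of `E^∞`: the subspace topology induced from the product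
topology on `(E¹)^ℕ`, `E¹` being discrete.  Its basis consists of the
cylinders `Z(α)`. -/
def infTop (S : SelfSimGraph G V Ed) : TopologicalSpace (InfPath S) :=
  TopologicalSpace.induced (fun ξ => ξ.1)
    (@Pi.topologicalSpace ℕ (fun _ => Ed) (fun _ => ⊥))

/-- Specification of the (unique) action of `G` on `E^∞`: `(g·ξ)|ₙ = g·(ξ|ₙ)`. -/
def ActSpec (S : SelfSimGraph G V Ed) (act : G → (ℕ → Ed) → ℕ → Ed) : Prop :=
  ∀ (g : G) (ξ : ℕ → Ed) (n : ℕ), takeP S (act g ξ) n = actP S g (takeP S ξ n)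

/-- The action of a triple `s = (α, g, β) ∈ S_{G,E}` on `E^∞`: it sends
`βξ ∈ Z(β)` to `α(g·ξ)`. -/
def sActSeq (S : SelfSimGraph G V Ed) (act : G → (ℕ → Ed) → ℕ → Ed)
    (α : Pth V Ed) (g : G) (β : Pth V Ed) (ξ : ℕ → Ed) : ℕ → Ed :=
  prepSeq α (act g (dropSeq (lenP β) ξ))

/-- The set of fixed points in `E^∞` of the element `s = (α, g, β)` of `S_{G,E}`. -/
def FixSet (S : SelfSimGraph G V Ed) (act : G → (ℕ → Ed) → ℕ → Ed)
    (α : Pth V Ed) (g : G) (β : Pth V Ed) : Set (InfPath S) :=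
  {η | InZ S β η.1 ∧ sActSeq S act α g β η.1 = η.1}

/-- A vertex `x` is simple if `r⁻¹(x)` is a singleton. -/
def SimpleVtx (S : SelfSimGraph G V Ed) (x : V) : Prop := ∃! e : Ed, S.r e = x

/-- A path `γ = γ₁⋯γₙ` has no entry if `d(γᵢ)` is simple for every `i`. -/
def NoEntry (S : SelfSimGraph G V Ed) : Pth V Ed → Prop
  | Pth.nil _ => True
  | Pth.cons e p => SimpleVtx S (S.d e) ∧ NoEntry S p

/-- A circuit: a path `γ` of nonzero length with `d(γ) = r(γ)`. -/
def Circuit (S : SelfSimGraph G V Ed) (γ : Pth V Ed) : Prop :=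
  WFP S γ ∧ 1 ≤ lenP γ ∧ srcP S γ = rngP S γ

/-- A `G`-circuit: a pair `(g,γ)` with `γ` of nonzero length and `d(γ) = g·r(γ)`. -/
def GCircuit (S : SelfSimGraph G V Ed) (g : G) (γ : Pth V Ed) : Prop :=
  WFP S γ ∧ 1 ≤ lenP γ ∧ srcP S γ = S.actV g (rngP S γ)

/-- `g` is slack at `x` if all sufficiently long paths with range `x` are
strongly fixed by `g`. -/
def SlackAt (S : SelfSimGraph G V Ed) (g : G) (x : V) : Prop :=
  ∃ n : ℕ, ∀ γ, WFP S γ → rngP S γ = x → n ≤ lenP γ → StronglyFixed S g γ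

/-- The sequence `(γⁿ, gₙ)` attached to a `G`-circuit `(g, γ)`:
`γ¹ = γ`, `g₁ = g`, `γⁿ⁺¹ = gₙ·γⁿ`, `gₙ₊₁ = φ(gₙ, γⁿ)` (indexed from `0`). -/
def circIter (S : SelfSimGraph G V Ed) (g : G) (γ : Pth V Ed) : ℕ → Pth V Ed × G
  | 0 => (γ, g)
  | n + 1 =>
      (actP S (circIter S g γ n).2 (circIter S g γ n).1,
       phiP S (circIter S g γ n).2 (circIter S g γ n).1)

/-- The finite concatenation `γ¹γ²⋯γⁿ`. -/
def circConcat (S : SelfSimGraph G V Ed) (g : G) (γ : Pth V Ed) : ℕ → Pth V Ed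
  | 0 => Pth.nil (rngP S γ)
  | n + 1 => compP (circConcat S g γ n) (circIter S g γ n).1

/-- `ξ` is the infinite concatenation `ξ(g,γ) = γ¹γ²γ³⋯`: it is an infinite path
whose initial segments are the finite concatenations `γ¹⋯γⁿ`. -/
def IsCircPath (S : SelfSimGraph G V Ed) (g : G) (γ : Pth V Ed) (ξ : ℕ → Ed) : Prop :=
  InfWF S ξ ∧ ∀ n, takeP S ξ (lenP (circConcat S g γ n)) = circConcat S g γ n

/-- `x ⇀ y`: there is a finite path with source `x` and range `y`. -/
def RelPath (S : SelfSimGraph G V Ed) (x y : V) : Prop :=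
  ∃ α, WFP S α ∧ srcP S α = x ∧ rngP S α = y

/-- `x ∼ y`: `x` and `y` are in the same `G`-orbit. -/
def RelOrb (S : SelfSimGraph G V Ed) (x y : V) : Prop :=
  ∃ g : G, S.actV g x = y

/-- `x ≫ y`: there is a vertex `u` with `x ⇀ u ∼ y`. -/
def RelGG (S : SelfSimGraph G V Ed) (x y : V) : Prop :=
  ∃ u, RelPath S x u ∧ RelOrb S u y

/-- A nonzero element `(α, g, β)` of `S_{G,E}`: `α, β ∈ E*`, `g ∈ G`, with
`d(α) = g·d(β)`. -/
def SGETriple (S : SelfSimGraph G V Ed) : Type :=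
  {t : Pth V Ed × G × Pth V Ed //
    WFP S t.1 ∧ WFP S t.2.2 ∧ srcP S t.1 = S.actV t.2.1 (srcP S t.2.2)}

/-- The inverse semigroup `S_{G,E}` (as a set): the triples together with `0 = none`. -/
def SGE (S : SelfSimGraph G V Ed) : Type := Option (SGETriple S)

/-- Forget the membership proofs. -/
def sgeToRaw (S : SelfSimGraph G V Ed) : SGE S → Option (Pth V Ed × G × Pth V Ed) :=
  Option.map Subtype.val

/-- The adjoint: `(α, g, β)* = (β, g⁻¹, α)`, `0* = 0`. -/
def starSGE (S : SelfSimGraph G V Ed) : SGE S → SGE S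
  | none => none
  | some s =>
      some ⟨(s.1.2.2, s.1.2.1⁻¹, s.1.1),
        ⟨s.2.2.1, s.2.1, by
          rw [s.2.2.2, ← S.actV_mul, inv_mul_cancel, S.actV_one]⟩⟩

/-- The idempotent `f_α = (α, 1, α)`. -/
def fIdem (S : SelfSimGraph G V Ed) (α : Pth V Ed) (h : WFP S α) : SGE S :=
  some ⟨(α, 1, α), ⟨h, h, by rw [S.actV_one]⟩⟩

/-- Specification of the multiplication of `S_{G,E}`:
`0` is absorbing; `(α,g,β)(γ,h,δ) = (α(g·ε), φ(g,ε)h, δ)` if `γ = βε`;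
`(α,g,β)(γ,h,δ) = (α, gφ(h⁻¹,ε)⁻¹, δ(h⁻¹·ε))` if `β = γε`; `0` otherwise. -/
def MulSpec (S : SelfSimGraph G V Ed) (mul : SGE S → SGE S → SGE S) : Prop :=
  (∀ t, mul none t = none) ∧
  (∀ s, mul s none = none) ∧
  (∀ (s t : SGETriple S) (ε : Pth V Ed),
     WFP S ε → rngP S ε = srcP S s.1.2.2 → t.1.1 = compP s.1.2.2 ε →
       sgeToRaw S (mul (some s) (some t)) =
         some (compP s.1.1 (actP S s.1.2.1 ε), phiP S s.1.2.1 ε * t.1.2.1, t.1.2.2)) ∧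
  (∀ (s t : SGETriple S) (ε : Pth V Ed),
     WFP S ε → rngP S ε = srcP S t.1.1 → s.1.2.2 = compP t.1.1 ε →
       sgeToRaw S (mul (some s) (some t)) =
         some (s.1.1, s.1.2.1 * (phiP S t.1.2.1⁻¹ ε)⁻¹,
               compP t.1.2.2 (actP S t.1.2.1⁻¹ ε))) ∧
  (∀ (s t : SGETriple S),
     (¬∃ ε, WFP S ε ∧ rngP S ε = srcP S s.1.2.2 ∧ t.1.1 = compP s.1.2.2 ε) →
     (¬∃ ε, WFP S ε ∧ rngP S ε = srcP S t.1.1 ∧ s.1.2.2 = compP t.1.1 ε) →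
       mul (some s) (some t) = none)

/-- Topological freeness of the standard action of `S_{G,E}` on `E^∞`: for every
nonzero `s = (α, g, β)`, every interior fixed point `ζ` of `s` satisfies `α = β`
and `ζ ∈ Z(ατ)` for some `τ` strongly fixed by `g`. -/
def TopFree (S : SelfSimGraph G V Ed) (act : G → (ℕ → Ed) → ℕ → Ed) : Prop :=
  ∀ (α : Pth V Ed) (g : G) (β : Pth V Ed),
    WFP S α → WFP S β → srcP S α = S.actV g (srcP S β) →
    ∀ ζ : InfPath S, ζ ∈ @interior (InfPath S) (infTop S) (FixSet S act α g β) →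
      α = β ∧ ∃ τ : Pth V Ed, WFP S τ ∧ rngP S τ = srcP S α ∧
        StronglyFixed S g τ ∧ InZ S (compP α τ) ζ.1

section AuxLemmas

variable {G V Ed : Type} [Group G]

lemma phi_one' (S : SelfSimGraph G V Ed) (e : Ed) : S.phi 1 e = 1 := by
  have h := S.phi_cocycle 1 1 e
  rw [mul_one, S.actE_one] at h
  have h2 : S.phi 1 e * 1 = S.phi 1 e * S.phi 1 e := by rw [mul_one]; exact h
  exact (mul_left_cancel h2).symm

lemma actP_one' (S : SelfSimGraph G V Ed) (p : Pth V Ed) : actP S 1 p = p := by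
  induction p with
  | nil x => simp [actP, S.actV_one]
  | cons e p ih => simp [actP, S.actE_one, phi_one', ih]

lemma phiP_one' (S : SelfSimGraph G V Ed) (p : Pth V Ed) : phiP S 1 p = 1 := by
  induction p with
  | nil x => rfl
  | cons e p ih => simpa [phiP, phi_one'] using ih

lemma lenP_actP (S : SelfSimGraph G V Ed) (g : G) (p : Pth V Ed) :
    lenP (actP S g p) = lenP p := by
  induction p generalizing g with
  | nil x => rfl
  | cons e p ih => simp [actP, lenP, ih]

lemma lenP_compP (p q : Pth V Ed) : lenP (compP p q) = lenP p + lenP q := by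
  induction p with
  | nil x => simp [compP, lenP]
  | cons e p ih => simp [compP, lenP, ih]; omega

lemma eq_nil_of_lenP_zero (S : SelfSimGraph G V Ed) {p : Pth V Ed} (h : lenP p = 0) :
    p = Pth.nil (rngP S p) := by
  cases p with
  | nil x => rfl
  | cons e p => simp [lenP] at h

lemma compP_nil_src (S : SelfSimGraph G V Ed) (p : Pth V Ed) :
    compP p (Pth.nil (srcP S p)) = p := by
  induction p with
  | nil x => rfl
  | cons e p ih => simp only [compP, srcP]; rw [ih]

lemma compP_cancel (S : SelfSimGraph G V Ed) :
    ∀ (a b p q : Pth V Ed), lenP a = lenP b → compP a p = compP b q →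
      p = q ∧ (srcP S a = srcP S b → a = b) := by
  intro a
  induction a with
  | nil x =>
    intro b p q hl hc
    cases b with
    | nil y =>
      refine ⟨hc, fun hs => ?_⟩
      simp only [srcP] at hs
      rw [hs]
    | cons f b => simp [lenP] at hl
  | cons e a ih =>
    intro b p q hl hc
    cases b with
    | nil y => simp [lenP] at hl
    | cons f b =>
      have hl' : lenP a = lenP b := by simp [lenP] at hl; omega
      simp only [compP, Pth.cons.injEq] at hc
      obtain ⟨hef, hc2⟩ := hc
      obtain ⟨hpq, hab⟩ := ih b p q hl' hc2
      refine ⟨hpq, fun hs => ?_⟩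
      have hs' : srcP S a = srcP S b := hs
      rw [hef, hab hs']

lemma pf_aux (S : SelfSimGraph G V Ed) (hPF : PseudoFree S) :
    ∀ (p : Pth V Ed) (g : G) (e : Ed),
      actP S g (Pth.cons e p) = Pth.cons e p → phiP S g (Pth.cons e p) = 1 → g = 1 := by
  intro p
  induction p with
  | nil x =>
    intro g e ha hp
    have ha' : Pth.cons (S.actE g e) (actP S (S.phi g e) (Pth.nil x)) =
        Pth.cons e (Pth.nil x) := ha
    injection ha' with h1 h2
    exact hPF g e h1 hp
  | cons e1 p ih =>
    intro g e ha hp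
    have ha' : Pth.cons (S.actE g e) (actP S (S.phi g e) (Pth.cons e1 p)) =
        Pth.cons e (Pth.cons e1 p) := ha
    injection ha' with h1 h2
    have := ih (S.phi g e) e1 h2 hp
    exact hPF g e h1 this

lemma sge_inj (S : SelfSimGraph G V Ed) {a b : SGE S}
    (h : sgeToRaw S a = sgeToRaw S b) : a = b := by
  cases a with
  | none =>
    cases b with
    | none => rfl
    | some t => exact absurd (show (none : Option (Pth V Ed × G × Pth V Ed)) = some t.1 from h) (by simp)
  | some s =>
    cases b with
    | none => exact absurd (show some s.1 = (none : Option (Pth V Ed × G × Pth V Ed)) from h) (by simp)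
    | some t =>
      change some s.1 = some t.1 at h
      simp only [sgeToRaw, Option.map_some, Option.some.injEq] at h
      exact congrArg some (Subtype.ext h)

lemma mul_idem (S : SelfSimGraph G V Ed) (mul : SGE S → SGE S → SGE S)
    (hmul : MulSpec S mul) (t : SGETriple S)
    (h1 : t.1.2.1 = 1) (he : t.1.1 = t.1.2.2) :
    mul (some t) (some t) = some t := by
  have h3 := hmul.2.2.1 t t (Pth.nil (srcP S t.1.2.2)) True.intro rfl
    (by rw [compP_nil_src]; exact he)
  have key : sgeToRaw S (mul (some t) (some t)) = some (t.1.1, t.1.2.1, t.1.2.2) := by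
    rw [h3]
    congr 1
    refine Prod.ext ?_ (Prod.ext ?_ rfl)
    · show compP t.1.1 (actP S t.1.2.1 (Pth.nil (srcP S t.1.2.2))) = t.1.1
      rw [h1, ← he]
      show compP t.1.1 (Pth.nil (S.actV 1 (srcP S t.1.1))) = t.1.1
      rw [S.actV_one, compP_nil_src]
    · show phiP S t.1.2.1 (Pth.nil (srcP S t.1.2.2)) * t.1.2.1 = t.1.2.1
      show t.1.2.1 * t.1.2.1 = t.1.2.1
      rw [h1, mul_one]
  exact sge_inj S (key.trans rfl)

end AuxLemmas

section MainAux

variable {G V Ed : Type} [Group G]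

lemma idem_shape (S : SelfSimGraph G V Ed) (mul : SGE S → SGE S → SGE S)
    (hmul : MulSpec S mul) (t : SGETriple S)
    (h : mul (some t) (some t) = some t) : t.1.2.1 = 1 ∧ t.1.1 = t.1.2.2 := by
  by_cases H1 : ∃ ε, WFP S ε ∧ rngP S ε = srcP S t.1.2.2 ∧ t.1.1 = compP t.1.2.2 ε
  · obtain ⟨ε, hw, hr, hc⟩ := H1
    have h3 := hmul.2.2.1 t t ε hw hr hc
    rw [h] at h3
    change some t.1 = some _ at h3
    simp only [sgeToRaw, Option.map_some, Option.some.injEq] at h3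
    have hA : t.1.1 = compP t.1.1 (actP S t.1.2.1 ε) := congrArg (fun z => z.1) h3
    have hB : t.1.2.1 = phiP S t.1.2.1 ε * t.1.2.1 := congrArg (fun z => z.2.1) h3
    have hl : lenP ε = 0 := by
      have := congrArg lenP hA
      rw [lenP_compP, lenP_actP] at this
      omega
    have hε : ε = Pth.nil (srcP S t.1.2.2) := by
      rw [eq_nil_of_lenP_zero S hl, hr]
    subst hε
    rw [compP_nil_src] at hc
    have hg : t.1.2.1 = t.1.2.1 * t.1.2.1 := hB
    exact ⟨right_eq_mul.mp hg, hc⟩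
  · by_cases H2 : ∃ ε, WFP S ε ∧ rngP S ε = srcP S t.1.1 ∧ t.1.2.2 = compP t.1.1 ε
    · obtain ⟨ε, hw, hr, hc⟩ := H2
      have h4 := hmul.2.2.2.1 t t ε hw hr hc
      rw [h] at h4
      change some t.1 = some _ at h4
      simp only [sgeToRaw, Option.map_some, Option.some.injEq] at h4
      have hB : t.1.2.1 = t.1.2.1 * (phiP S t.1.2.1⁻¹ ε)⁻¹ := congrArg (fun z => z.2.1) h4
      have hC : t.1.2.2 = compP t.1.2.2 (actP S t.1.2.1⁻¹ ε) := congrArg (fun z => z.2.2) h4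
      have hl : lenP ε = 0 := by
        have := congrArg lenP hC
        rw [lenP_compP, lenP_actP] at this
        omega
      have hε : ε = Pth.nil (srcP S t.1.1) := by
        rw [eq_nil_of_lenP_zero S hl, hr]
      subst hε
      rw [compP_nil_src] at hc
      have hg : t.1.2.1 = t.1.2.1 * (t.1.2.1⁻¹)⁻¹ := hB
      rw [inv_inv] at hg
      exact ⟨left_eq_mul.mp hg, hc.symm⟩
    · rw [hmul.2.2.2.2 t t H1 H2] at h
      exact absurd h (by simp)

end MainAux

/-- `S_{G,E}` is `E*`-unitary (whenever `e` is a nonzero idempotent and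
`s·e = e`, then `s` is idempotent) if and only if `(G,E,φ)` is pseudo free. -/
theorem statement7 {G V Ed : Type} [Group G] [Fintype V] [Fintype Ed]
    (S : SelfSimGraph G V Ed) (hNoSources : ∀ x : V, ∃ e : Ed, S.r e = x)
    (mul : SGE S → SGE S → SGE S) (hmul : MulSpec S mul) :
    (∀ e s : SGE S, e ≠ none → mul e e = e → mul s e = e → mul s s = s) ↔
      PseudoFree S := by
  constructor
  · -- E*-unitary → pseudo free
    intro hU g e0 hA hP
    have hx : S.actV g (S.r e0) = S.r e0 := by rw [← S.r_act, hA]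
    have hwfα : WFP S (Pth.cons e0 (Pth.nil (S.d e0))) := ⟨rfl, True.intro⟩
    let fT : SGETriple S :=
      ⟨(Pth.cons e0 (Pth.nil (S.d e0)), 1, Pth.cons e0 (Pth.nil (S.d e0))),
        hwfα, hwfα, by rw [S.actV_one]⟩
    let sT : SGETriple S :=
      ⟨(Pth.nil (S.r e0), g, Pth.nil (S.r e0)), True.intro, True.intro, hx.symm⟩
    have hff : mul (some fT) (some fT) = some fT := mul_idem S mul hmul fT rfl rfl
    have h3 := hmul.2.2.1 sT fT (Pth.cons e0 (Pth.nil (S.d e0))) hwfα rfl rfl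
    have hsf : mul (some sT) (some fT) = some fT := by
      apply sge_inj S
      rw [h3]
      have hcomp : (compP sT.1.1 (actP S sT.1.2.1 (Pth.cons e0 (Pth.nil (S.d e0)))),
          phiP S sT.1.2.1 (Pth.cons e0 (Pth.nil (S.d e0))) * fT.1.2.1, fT.1.2.2) = fT.1 := by
        refine Prod.ext ?_ (Prod.ext ?_ rfl)
        · show Pth.cons (S.actE g e0) (Pth.nil (S.actV (S.phi g e0) (S.d e0))) =
            Pth.cons e0 (Pth.nil (S.d e0))
          rw [hA, hP, S.actV_one]
        · show S.phi g e0 * 1 = 1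
          rw [hP, mul_one]
      rw [hcomp]
      rfl
    have hss := hU (some fT) (some sT) (Option.some_ne_none _) hff hsf
    have h5 := hmul.2.2.1 sT sT (Pth.nil (S.r e0)) True.intro rfl rfl
    rw [hss] at h5
    have h6 : (sT.1 : Pth V Ed × G × Pth V Ed) =
        (compP sT.1.1 (actP S sT.1.2.1 (Pth.nil (S.r e0))),
          phiP S sT.1.2.1 (Pth.nil (S.r e0)) * sT.1.2.1, sT.1.2.2) := by
      change some sT.1 = some _ at h5
      simpa only [sgeToRaw, Option.map_some, Option.some.injEq] using h5
    have hg : g = g * g := congrArg (fun z => z.2.1) h6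
    exact right_eq_mul.mp hg
  · -- pseudo free → E*-unitary
    intro hPF e s he hee hse
    obtain ⟨eT, rfl⟩ : ∃ eT, e = some eT := by
      cases e with
      | none => exact absurd rfl he
      | some t => exact ⟨t, rfl⟩
    cases s with
    | none => exact hmul.1 none
    | some sT =>
      obtain ⟨h1e, heqe⟩ := idem_shape S mul hmul eT hee
      by_cases H1 : ∃ ε, WFP S ε ∧ rngP S ε = srcP S sT.1.2.2 ∧ eT.1.1 = compP sT.1.2.2 ε
      · obtain ⟨ε, hw, hr, hc⟩ := H1
        have h3 := hmul.2.2.1 sT eT ε hw hr hc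
        rw [hse] at h3
        change some eT.1 = some _ at h3
        simp only [sgeToRaw, Option.map_some, Option.some.injEq] at h3
        have hA : eT.1.1 = compP sT.1.1 (actP S sT.1.2.1 ε) := congrArg (fun z => z.1) h3
        have hB : eT.1.2.1 = phiP S sT.1.2.1 ε * eT.1.2.1 := congrArg (fun z => z.2.1) h3
        have hphi : phiP S sT.1.2.1 ε = 1 := right_eq_mul.mp hB
        have hcomp : compP sT.1.1 (actP S sT.1.2.1 ε) = compP sT.1.2.2 ε := hA.symm.trans hc
        have hlen : lenP sT.1.1 = lenP sT.1.2.2 := by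
          have := congrArg lenP hcomp
          rw [lenP_compP, lenP_compP, lenP_actP] at this
          omega
        obtain ⟨hfix, hsrcimp⟩ := compP_cancel S sT.1.1 sT.1.2.2 _ _ hlen hcomp
        have hg1 : sT.1.2.1 = 1 := by
          cases ε with
          | nil v => exact hphi
          | cons e1 p => exact pf_aux S hPF p sT.1.2.1 e1 hfix hphi
        have hab : sT.1.1 = sT.1.2.2 := by
          apply hsrcimp
          have hsrc := sT.2.2.2
          rw [hg1, S.actV_one] at hsrc
          exact hsrc
        exact mul_idem S mul hmul sT hg1 hab
      · by_cases H2 : ∃ ε, WFP S ε ∧ rngP S ε = srcP S eT.1.1 ∧ sT.1.2.2 = compP eT.1.1 ε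
        · obtain ⟨ε, hw, hr, hc⟩ := H2
          have h4 := hmul.2.2.2.1 sT eT ε hw hr hc
          rw [hse] at h4
          change some eT.1 = some _ at h4
          simp only [sgeToRaw, Option.map_some, Option.some.injEq] at h4
          have hA : eT.1.1 = sT.1.1 := congrArg (fun z => z.1) h4
          have hB : eT.1.2.1 = sT.1.2.1 * (phiP S eT.1.2.1⁻¹ ε)⁻¹ :=
            congrArg (fun z => z.2.1) h4
          have hC : eT.1.2.2 = compP eT.1.2.2 (actP S eT.1.2.1⁻¹ ε) :=
            congrArg (fun z => z.2.2) h4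
          rw [h1e, inv_one, phiP_one'] at hB
          rw [h1e, inv_one, actP_one'] at hC
          rw [inv_one, mul_one] at hB
          have hl : lenP ε = 0 := by
            have := congrArg lenP hC
            rw [lenP_compP] at this
            omega
          have hε : ε = Pth.nil (srcP S eT.1.1) := by
            rw [eq_nil_of_lenP_zero S hl, hr]
          subst hε
          rw [compP_nil_src] at hc
          exact mul_idem S mul hmul sT hB.symm (hc.trans hA).symm
        · rw [hmul.2.2.2.2 sT eT H1 H2] at hse
          exact absurd hse (by simp)
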